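/- Assume s < 0. Let W ⊆ V be such that B₃ ∩ W ≠ ∅ and C ∩ W ≠ ∅. Then the affine dimension of P(C ∩ W) is at most the affine dimension of P((B₃ ∪ C) ∩ W) minus one. -/

import Mathlib

open scoped RealInnerProductSpace

/-- The `i`-th column of `y = A - s·I`, where `A` is the real adjacency matrix of `G`,
viewed as a point of Euclidean space `ℝ^V`. -/
noncomputable def srgCol {V : Type*} [Fintype V] [DecidableEq V]
    (G : SimpleGraph V) [DecidableRel G.Adj] (s : ℝ) (i : V) : EuclideanSpace ℝ V :=
  (WithLp.equiv 2 (V → ℝ)).symm fun j => (G.adjMatrix ℝ - s • (1 : Matrix V V ℝ)) j i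


/-- The affine dimension of a point set: the finrank of the direction of its affine span. -/
noncomputable def adim {V : Type*} [Fintype V] (X : Set (EuclideanSpace ℝ V)) : ℕ :=
  Module.finrank ℝ (affineSpan ℝ X).direction


/-- `nN G i U` is the number of neighbours of `i` lying in `U`. -/
noncomputable def nN {V : Type*} (G : SimpleGraph V) (i : V) (U : Set V) : ℕ :=
  {j ∈ U | G.Adj i j}.ncard

lemma srgCol_apply {V : Type*} [Fintype V] [DecidableEq V]
    (G : SimpleGraph V) [DecidableRel G.Adj] (s : ℝ) (i j : V) :
    srgCol G s i j = (if G.Adj j i then (1:ℝ) else 0) - s * (if j = i then 1 else 0) := by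
  simp [srgCol, Matrix.sub_apply, Matrix.smul_apply, Matrix.one_apply]

lemma sum_srgCol {V : Type*} [Fintype V] [DecidableEq V]
    (G : SimpleGraph V) [DecidableRel G.Adj] (s : ℝ) (i : V) (B : Set V) (hi : i ∉ B) :
    ∑ j ∈ B.toFinite.toFinset, srgCol G s i j = (nN G i B : ℝ) := by
  classical
  have h : ∀ j ∈ B.toFinite.toFinset, srgCol G s i j = if G.Adj i j then (1:ℝ) else 0 := by
    intro j hj
    rw [srgCol_apply]
    have hji : j ≠ i := by rintro rfl; exact hi (B.toFinite.mem_toFinset.mp hj)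
    simp [hji, G.adj_comm]
  rw [Finset.sum_congr rfl h, Finset.sum_boole]
  rw [nN, Set.ncard_eq_toFinset_card _ (Set.toFinite _)]
  norm_num
  congr 1
  ext j
  simp [Set.Finite.mem_toFinset]

theorem stmt_12 {V : Type*} [Fintype V] [DecidableEq V]
    (G : SimpleGraph V) [DecidableRel G.Adj] (v k l m : ℕ)
    (hG : G.IsSRGWith v k l m) (s : ℝ) (hs : s < 0)
    (B₁ B₂ B₃ C : Set V)
    (hcover : B₁ ∪ B₂ ∪ B₃ ∪ C = Set.univ)
    (hd₁₂ : Disjoint B₁ B₂) (hd₁₃ : Disjoint B₁ B₃) (hd₁C : Disjoint B₁ C)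
    (hd₂₃ : Disjoint B₂ B₃) (hd₂C : Disjoint B₂ C) (hd₃C : Disjoint B₃ C)
    (hB₁₂ : ∀ i ∈ B₁, ∀ j ∈ B₂, ¬G.Adj i j)
    (hB₁₃ : ∀ i ∈ B₁, ∀ j ∈ B₃, ¬G.Adj i j)
    (hB₂₃ : ∀ i ∈ B₂, ∀ j ∈ B₃, ¬G.Adj i j)
    (hC : ∀ i ∈ C, nN G i B₁ = nN G i B₂ ∧ nN G i B₂ = nN G i B₃)
    (W : Set V)
    (hW₁ : (B₃ ∩ W).Nonempty) (hW₂ : (C ∩ W).Nonempty) :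
    adim (srgCol G s '' (C ∩ W)) + 1 ≤ adim (srgCol G s '' ((B₃ ∪ C) ∩ W)) := by
  classical
  obtain ⟨b, hbB, hbW⟩ := hW₁
  obtain ⟨c0, hcC0, hcW0⟩ := hW₂
  set f : EuclideanSpace ℝ V →ₗ[ℝ] ℝ :=
    { toFun := fun x => (∑ j ∈ B₁.toFinite.toFinset, x j) + (∑ j ∈ B₂.toFinite.toFinset, x j)
        - 2 * ∑ j ∈ B₃.toFinite.toFinset, x j
      map_add' := by
        intro x y
        simp only [PiLp.add_apply, Finset.sum_add_distrib]
        ring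
      map_smul' := by
        intro r x
        simp only [PiLp.smul_apply, smul_eq_mul, ← Finset.mul_sum, RingHom.id_apply]
        ring } with hfdef
  have hfC : ∀ i ∈ C, f (srgCol G s i) = 0 := by
    intro i hi
    have h1 := sum_srgCol G s i B₁ (Set.disjoint_right.mp hd₁C hi)
    have h2 := sum_srgCol G s i B₂ (Set.disjoint_right.mp hd₂C hi)
    have h3 := sum_srgCol G s i B₃ (Set.disjoint_right.mp hd₃C hi)
    obtain ⟨e1, e2⟩ := hC i hi
    show (∑ j ∈ B₁.toFinite.toFinset, srgCol G s i j) + (∑ j ∈ B₂.toFinite.toFinset, srgCol G s i j)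
        - 2 * ∑ j ∈ B₃.toFinite.toFinset, srgCol G s i j = 0
    rw [h1, h2, h3, e1, e2]
    ring
  have hfb : f (srgCol G s b) < 0 := by
    have h1 : ∑ j ∈ B₁.toFinite.toFinset, srgCol G s b j = 0 := by
      apply Finset.sum_eq_zero
      intro j hj
      have hj' : j ∈ B₁ := (Set.Finite.mem_toFinset _).mp hj
      have hna : ¬ G.Adj j b := hB₁₃ j hj' b hbB
      have hne : j ≠ b := fun h => (Set.disjoint_left.mp hd₁₃ hj') (h ▸ hbB)
      rw [srgCol_apply]; simp [hna, hne]
    have h2 : ∑ j ∈ B₂.toFinite.toFinset, srgCol G s b j = 0 := by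
      apply Finset.sum_eq_zero
      intro j hj
      have hj' : j ∈ B₂ := (Set.Finite.mem_toFinset _).mp hj
      have hna : ¬ G.Adj j b := hB₂₃ j hj' b hbB
      have hne : j ≠ b := fun h => (Set.disjoint_left.mp hd₂₃ hj') (h ▸ hbB)
      rw [srgCol_apply]; simp [hna, hne]
    have h3 : 0 < ∑ j ∈ B₃.toFinite.toFinset, srgCol G s b j := by
      apply Finset.sum_pos'
      · intro j hj
        rw [srgCol_apply]
        by_cases hjb : j = b
        · subst hjb; simp [G.irrefl]; linarith
        · simp [hjb]; positivity
      · refine ⟨b, (Set.Finite.mem_toFinset _).mpr hbB, ?_⟩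
        rw [srgCol_apply]
        simp [G.irrefl]
        linarith
    show (∑ j ∈ B₁.toFinite.toFinset, srgCol G s b j) + (∑ j ∈ B₂.toFinite.toFinset, srgCol G s b j)
        - 2 * ∑ j ∈ B₃.toFinite.toFinset, srgCol G s b j < 0
    rw [h1, h2]
    linarith
  set small := srgCol G s '' (C ∩ W) with hsmall
  set big := srgCol G s '' ((B₃ ∪ C) ∩ W) with hbig
  have hsub : small ⊆ big :=
    Set.image_mono (Set.inter_subset_inter_left _ Set.subset_union_right)
  have hspan0 : ∀ x ∈ affineSpan ℝ small, f x = 0 := by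
    intro x hx
    have hsub' : small ⊆ (LinearMap.ker f).toAffineSubspace.carrier := by
      rintro _ ⟨i, ⟨hiC, _⟩, rfl⟩
      exact hfC i hiC
    have hle := affineSpan_le.mpr hsub'
    exact (LinearMap.mem_ker).mp (Submodule.mem_toAffineSubspace.mp (hle hx))
  have hbmem : srgCol G s b ∈ affineSpan ℝ big :=
    subset_affineSpan ℝ _ ⟨b, ⟨Or.inl hbB, hbW⟩, rfl⟩
  have hp : srgCol G s c0 ∈ affineSpan ℝ small :=
    subset_affineSpan ℝ _ ⟨c0, ⟨hcC0, hcW0⟩, rfl⟩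
  have hps : srgCol G s c0 ∈ affineSpan ℝ big := affineSpan_mono ℝ hsub hp
  have hlt : (affineSpan ℝ small).direction < (affineSpan ℝ big).direction := by
    refine lt_of_le_of_ne (AffineSubspace.direction_le (affineSpan_mono ℝ hsub)) ?_
    intro heq
    have hv : srgCol G s b -ᵥ srgCol G s c0 ∈ (affineSpan ℝ big).direction :=
      AffineSubspace.vsub_mem_direction hbmem hps
    rw [← heq] at hv
    have hmem : srgCol G s b ∈ affineSpan ℝ small := by
      have := AffineSubspace.vadd_mem_of_mem_direction hv hp
      simpa using this
    have h0 := hspan0 _ hmem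
    rw [h0] at hfb
    exact lt_irrefl 0 hfb
  have hfr := Submodule.finrank_lt_finrank_of_lt hlt
  simp only [adim]
  omega
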